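/- For m ≥ 1 and h ≥ 0, the generating function for partitions in B_{a,b,k}(m) with largest part kh + b equals ∑_{i ≥ 0} μ^{m-h-i-1} ν^{h+i+1} q^{ma + kh² + kh + (b-a)(h+i+1)} [h+i choose h]_{q^k} [m-h-i-1 choose h]_{q^k}. -/

import Mathlib

noncomputable section

/-- The q-Pochhammer symbol (q^t; q^t)_n as a polynomial in q. -/
def qpoch (t n : ℕ) : Polynomial ℚ :=
  ∏ i ∈ Finset.range n, (1 - Polynomial.X ^ (t * (i + 1)))

/-- The Gaussian binomial coefficient [A choose B] in base q^t:
(q^t;q^t)_A / ((q^t;q^t)_B (q^t;q^t)_{A-B}) when 0 ≤ B ≤ A, and 0 otherwise. -/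
def gauss (t : ℕ) (A B : ℤ) : Polynomial ℚ :=
  if 0 ≤ B ∧ B ≤ A then
    qpoch t A.toNat / (qpoch t B.toNat * qpoch t (A - B).toNat)
  else 0
/-- Formal power series in three variables x/μ = X 0, z/ν = X 1, q = X 2. -/
abbrev S3 := MvPowerSeries (Fin 3) ℚ

/-- Product topology with discrete coefficients, so that infinite sums and
products of power series are meaningful. -/
instance : TopologicalSpace S3 :=
  @Pi.topologicalSpace ((Fin 3) →₀ ℕ) (fun _ => ℚ) (fun _ => ⊥)

/-- Interpret a polynomial in q as a power series in the variable X 2. -/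
def pq (p : Polynomial ℚ) : S3 := Polynomial.aeval (MvPowerSeries.X 2 : S3) p
/-- The basis set B_{a,b,k}(m): partitions (non-increasing lists) with m parts,
each part ≡ a or b (mod k), last part a or b, and consecutive parts differing
by less than k. -/
def IsBabk (a b k m : ℕ) (l : List ℕ) : Prop :=
  l.length = m ∧ l.Pairwise (· ≥ ·) ∧
    (∀ x ∈ l, x % k = a % k ∨ x % k = b % k) ∧
    (l.getLast? = some a ∨ l.getLast? = some b) ∧
    l.Chain' (fun x y => x < y + k)

open MvPowerSeries in
/-- g_{a,b,k}(m, lp): the generating function ∑ μ^{ℓ_a(λ)} ν^{ℓ_b(λ)} q^{|λ|}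
(μ = X 0, ν = X 1, q = X 2) over partitions λ in B_{a,b,k}(m) with largest
part lp. -/
def gab (a b k m lp : ℕ) : S3 :=
  ∑' l : {l : List ℕ // IsBabk a b k m l ∧ l.head? = some lp},
    (X 0 : S3) ^ (l.1.filter (fun x => x % k = a % k)).length *
      (X 1 : S3) ^ (l.1.filter (fun x => x % k = b % k)).length *
        (X 2 : S3) ^ l.1.sum



def GN (t : ℕ) : ℕ → ℕ → Polynomial ℚ
  | _, 0 => 1
  | 0, _+1 => 0
  | n+1, B+1 => GN t n B + Polynomial.X ^ (t*(B+1)) * GN t n (B+1)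

lemma GN_zero_right (t n : ℕ) : GN t n 0 = 1 := by cases n <;> rfl

lemma GN_eq_zero (t : ℕ) : ∀ n B, n < B → GN t n B = 0 := by
  intro n
  induction n with
  | zero => intro B hB; match B, hB with | B+1, _ => rfl
  | succ n ih =>
    intro B hB
    match B, hB with
    | B+1, hB =>
      show GN t n B + Polynomial.X ^ (t*(B+1)) * GN t n (B+1) = 0
      rw [ih B (by omega), ih (B+1) (by omega), mul_zero, add_zero]

lemma GN_diag (t : ℕ) : ∀ n, GN t n n = 1 := by
  intro n
  induction n with
  | zero => rfl
  | succ n ih =>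
    show GN t n n + Polynomial.X ^ (t*(n+1)) * GN t n (n+1) = 1
    rw [ih, GN_eq_zero t n (n+1) (by omega), mul_zero, add_zero]

lemma qpoch_succ (t n : ℕ) : qpoch t (n+1) = qpoch t n * (1 - Polynomial.X ^ (t * (n+1))) := by
  rw [qpoch, Finset.prod_range_succ]; rfl

lemma qpoch_ne_zero (t n : ℕ) (ht : 1 ≤ t) : qpoch t n ≠ 0 := by
  rw [qpoch]
  apply Finset.prod_ne_zero_iff.2
  intro i _ h
  have hm : t * (i+1) ≠ 0 := Nat.mul_ne_zero (by omega) (by omega)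
  have ht' : ¬ (t = 0) := by omega
  have := congrArg (fun p => Polynomial.coeff p 0) h
  simp [Polynomial.coeff_X_pow, hm, ht'] at this

lemma qpoch_GN (t : ℕ) : ∀ n B, B ≤ n → qpoch t n = GN t n B * (qpoch t B * qpoch t (n - B)) := by
  intro n
  induction n with
  | zero => intro B hB; interval_cases B; simp [GN_zero_right, qpoch]
  | succ n ih =>
    intro B hB
    match B with
    | 0 => simp [GN_zero_right, qpoch]
    | B+1 =>
      show qpoch t (n+1) = (GN t n B + Polynomial.X ^ (t*(B+1)) * GN t n (B+1)) * (qpoch t (B+1) * qpoch t (n+1-(B+1)))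
      rcases eq_or_lt_of_le hB with heq | hlt
      · have hBn : B = n := by omega
        subst hBn
        rw [GN_eq_zero t B (B+1) (by omega), mul_zero, add_zero, GN_diag]
        simp [qpoch]
      · have hB2 : B + 1 ≤ n := by omega
        have e1 : qpoch t n = GN t n B * (qpoch t B * qpoch t (n - B)) := ih B (by omega)
        have e2 : qpoch t n = GN t n (B+1) * (qpoch t (B+1) * qpoch t (n - (B+1))) := ih (B+1) hB2
        have h1 : qpoch t (B+1) = qpoch t B * (1 - Polynomial.X ^ (t*(B+1))) := qpoch_succ t B
        have h2 : n + 1 - (B + 1) = n - B := by omega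
        have h3 : n - B = (n - (B+1)) + 1 := by omega
        have h4 : qpoch t (n - B) = qpoch t (n - (B+1)) * (1 - Polynomial.X ^ (t * (n - B))) := by
          rw [h3, qpoch_succ, ← h3]
        have hX : (Polynomial.X : Polynomial ℚ) ^ (t*(B+1)) * Polynomial.X ^ (t*(n-B)) = Polynomial.X ^ (t*(n+1)) := by
          rw [← pow_add, ← Nat.mul_add]
          congr 2
          omega
        rw [h1] at e2
        rw [h4] at e1
        rw [qpoch_succ t n, h2, h4, h1, ← hX]
        linear_combination (1 - Polynomial.X ^ (t*(B+1))) * e1 +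
          (Polynomial.X ^ (t*(B+1)) - Polynomial.X ^ (t*(B+1)) * Polynomial.X ^ (t*(n-B))) * e2

lemma gauss_natCast (t : ℕ) (ht : 1 ≤ t) (n B : ℕ) : gauss t (n:ℤ) (B:ℤ) = GN t n B := by
  by_cases hB : B ≤ n
  · rw [gauss, if_pos ⟨by positivity, by exact_mod_cast hB⟩]
    have h1 : ((n:ℤ)).toNat = n := Int.toNat_natCast n
    have h2 : ((B:ℤ)).toNat = B := Int.toNat_natCast B
    have h3 : ((n:ℤ) - (B:ℤ)).toNat = n - B := by omega
    rw [h1, h2, h3, qpoch_GN t n B hB]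
    exact mul_div_cancel_right₀ _ (mul_ne_zero (qpoch_ne_zero t B ht) (qpoch_ne_zero t (n-B) ht))
  · rw [gauss, if_neg (by push_neg; intro _; exact_mod_cast by omega : ¬((0:ℤ) ≤ B ∧ (B:ℤ) ≤ n)),
      GN_eq_zero t n B (by omega)]

lemma gauss_neg (t : ℕ) (A B : ℤ) (h : ¬(0 ≤ B ∧ B ≤ A)) : gauss t A B = 0 := if_neg h

lemma pascal (t : ℕ) (ht : 1 ≤ t) (n : ℤ) (B : ℕ) (hB : 1 ≤ B) :
    gauss t (n+1) (B:ℤ) = gauss t n ((B:ℤ)-1) + Polynomial.X ^ (t*B) * gauss t n (B:ℤ) := by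
  by_cases hn : 0 ≤ n
  · lift n to ℕ using hn
    have c1 : ((n:ℤ)+1) = ((n+1 : ℕ) : ℤ) := by push_cast; ring
    have c2 : ((B:ℤ)-1) = ((B-1 : ℕ) : ℤ) := by omega
    rw [c1, c2, gauss_natCast t ht, gauss_natCast t ht, gauss_natCast t ht]
    match B, hB with
    | B+1, _ =>
      show GN t (n+1) (B+1) = GN t n (B+1-1) + Polynomial.X ^ (t*(B+1)) * GN t n (B+1)
      rfl
  · rw [gauss_neg t (n+1) B (by omega), gauss_neg t n ((B:ℤ)-1) (by omega),
      gauss_neg t n B (by omega), mul_zero, add_zero]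
lemma pq_add (p q : Polynomial ℚ) : pq (p + q) = pq p + pq q := by simp [pq]
lemma pq_mul (p q : Polynomial ℚ) : pq (p * q) = pq p * pq q := by simp [pq]
lemma pq_zero : pq 0 = 0 := by simp [pq]
lemma pq_one : pq 1 = 1 := by simp [pq]

open MvPowerSeries in
lemma pq_X_pow (n : ℕ) : pq (Polynomial.X ^ n) = (X 2 : S3) ^ n := by
  simp [pq]

lemma gauss_nat_eq (t : ℕ) (ht : 1 ≤ t) (A : ℤ) (B n : ℕ) (hA : A = (n:ℤ)) :
    gauss t A (B:ℤ) = GN t n B := by rw [hA, gauss_natCast t ht]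

open MvPowerSeries

def TA (a b k m h i : ℕ) : S3 :=
  (X 0 : S3) ^ ((m : ℤ) - h - i - 1).toNat * (X 1 : S3) ^ (h + i + 1) *
    (X 2 : S3) ^ (m * a + k * h ^ 2 + k * h + (b - a) * (h + i + 1)) *
      pq (gauss k ((h : ℤ) + i) h) *
        pq (gauss k ((m : ℤ) - h - i - 1) h)

def gaussC (k h j : ℕ) : Polynomial ℚ :=
  if h = 0 then (if j = 0 then 1 else 0) else gauss k ((h:ℤ) + j - 1) ((h:ℤ) - 1)

def Tc (a b k m h j : ℕ) : S3 :=
  (X 0 : S3) ^ ((m : ℤ) - h - j).toNat * (X 1 : S3) ^ (h + j) *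
    (X 2 : S3) ^ (m * a + k * h ^ 2 + (b - a) * (h + j)) *
      pq (gaussC k h j) * pq (gauss k ((m : ℤ) - h - j) h)

def VA (a b k M h i : ℕ) : S3 :=
  (X 0 : S3) ^ ((M : ℤ) - h - i - 1).toNat * (X 1 : S3) ^ (h + i + 1) *
    (X 2 : S3) ^ (M * a + k * h ^ 2 + k * h + (b - a) * (h + i + 1) + k * h) *
      pq (gauss k ((h : ℤ) + i - 1) h) * pq (gauss k ((M : ℤ) - h - i - 1) h)

def WC (a b k M h j : ℕ) : S3 :=
  (X 0 : S3) ^ ((M : ℤ) - h - j).toNat * (X 1 : S3) ^ (h + j) *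
    (X 2 : S3) ^ (M * a + k * h ^ 2 + (b - a) * (h + j) + k * h) *
      pq (gaussC k h j) * pq (gauss k ((M : ℤ) - h - j - 1) h)

def Ac (a b k m h : ℕ) : S3 := ∑ i ∈ Finset.range m, TA a b k m h i
def Cc (a b k m h : ℕ) : S3 := ∑ j ∈ Finset.range (m+1), Tc a b k m h j

lemma gauss_split (k : ℕ) (hk : 1 ≤ k) (h i : ℕ) :
    gauss k ((h:ℤ)+(i:ℤ)) (h:ℤ) =
      gaussC k h i + Polynomial.X ^ (k*h) * gauss k ((h:ℤ)+(i:ℤ)-1) (h:ℤ) := by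
  match h with
  | 0 =>
    match i with
    | 0 =>
      rw [gauss_nat_eq k hk _ 0 0 (by omega), gauss_neg k _ _ (by omega)]
      simp [gaussC, GN]
    | i+1 =>
      rw [gauss_nat_eq k hk _ 0 (i+1) (by omega),
        gauss_nat_eq k hk _ 0 i (by omega)]
      simp [gaussC, GN_zero_right]
  | h0+1 =>
    rw [gaussC, if_neg (Nat.succ_ne_zero h0)]
    have e : ((h0+1:ℕ):ℤ)+(i:ℤ) = (((h0+1:ℕ):ℤ)+(i:ℤ)-1)+1 := by ring
    conv_lhs => rw [e, pascal k hk _ (h0+1) (by omega)]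

lemma keyA1 (a b k m h i : ℕ) (hab : a ≤ b) (hk : 1 ≤ k) :
    TA a b k (m+1) h i =
      (X 1 : S3) * (X 2 : S3)^(k*h+b) * Tc a b k m h i + VA a b k (m+1) h i := by
  obtain ⟨c, rfl⟩ : ∃ c, b = a + c := ⟨b - a, by omega⟩
  unfold TA Tc VA
  rw [gauss_split k hk h i, pq_add, pq_mul, pq_X_pow]
  have e1 : (((m+1:ℕ)):ℤ) - (h:ℤ) - (i:ℤ) - 1 = (m:ℤ) - (h:ℤ) - (i:ℤ) := by push_cast; ring
  rw [e1]
  simp only [Nat.add_sub_cancel_left]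
  ring

lemma keyA2 (a b k m h i : ℕ) (hab : a ≤ b) :
    VA a b k (m+1) h (i+1) = (X 1 : S3) * (X 2 : S3)^(k*h+b) * TA a b k m h i := by
  obtain ⟨c, rfl⟩ : ∃ c, b = a + c := ⟨b - a, by omega⟩
  unfold VA TA
  have e1 : (((m+1:ℕ)):ℤ) - (h:ℤ) - ((i+1:ℕ):ℤ) - 1 = (m:ℤ) - (h:ℤ) - (i:ℤ) - 1 := by
    push_cast; ring
  have e2 : (h:ℤ) + ((i+1:ℕ):ℤ) - 1 = (h:ℤ) + (i:ℤ) := by push_cast; ring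
  rw [e1, e2]
  simp only [Nat.add_sub_cancel_left]
  ring

lemma keyA3 (a b k M h : ℕ) : VA a b k M h 0 = 0 := by
  unfold VA
  rw [gauss_neg k _ _ (by omega), pq_zero]
  ring

lemma R1 (a b k : ℕ) (hab : a ≤ b) (hk : 1 ≤ k) (m h : ℕ) :
    Ac a b k (m+1) h = (X 1 : S3) * (X 2 : S3)^(k*h+b) * (Ac a b k m h + Cc a b k m h) := by
  unfold Ac Cc
  rw [Finset.sum_congr rfl (fun i _ => keyA1 a b k m h i hab hk), Finset.sum_add_distrib,
    Finset.sum_range_succ' (VA a b k (m+1) h) m, keyA3, add_zero,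
    Finset.sum_congr rfl (fun i _ => keyA2 a b k m h i hab),
    ← Finset.mul_sum, ← Finset.mul_sum]
  ring

lemma Tc_zero_of_neg (a b k m h j : ℕ) (hj : (m:ℤ) - h - j < h) :
    Tc a b k m h j = 0 := by
  unfold Tc
  rw [gauss_neg k ((m:ℤ) - h - j) (h:ℤ) (by omega), pq_zero, mul_zero]

lemma TA_zero_of_neg (a b k m h i : ℕ) (hi : (m:ℤ) - h - i - 1 < h) :
    TA a b k m h i = 0 := by
  unfold TA
  rw [gauss_neg k ((m:ℤ) - h - i - 1) (h:ℤ) (by omega), pq_zero, mul_zero]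

lemma gaussC_succ (k h0 j : ℕ) :
    gaussC k (h0+1) j = gauss k ((h0:ℤ) + j) (h0:ℤ) := by
  rw [gaussC, if_neg (Nat.succ_ne_zero h0)]
  congr 1 <;> push_cast <;> ring

lemma keyC1 (a b k m h0 j : ℕ) (hab : a ≤ b) (hk : 1 ≤ k) :
    Tc a b k (m+1) (h0+1) j =
      (X 0 : S3) * (X 2 : S3)^(k*(h0+1)+a) * TA a b k m h0 j + WC a b k (m+1) (h0+1) j := by
  obtain ⟨c, rfl⟩ : ∃ c, b = a + c := ⟨b - a, by omega⟩
  by_cases hneg : (m:ℤ) - (h0+1) - j < 0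
  · rw [Tc_zero_of_neg a (a+c) k (m+1) (h0+1) j (by push_cast; omega),
      TA_zero_of_neg a (a+c) k m h0 j (by push_cast at hneg ⊢; omega)]
    unfold WC
    rw [gauss_neg k (((m+1:ℕ):ℤ) - ((h0+1:ℕ):ℤ) - (j:ℤ) - 1) ((h0+1:ℕ):ℤ) (by push_cast at hneg ⊢; omega), pq_zero, mul_zero, mul_zero, zero_add]
  · push_neg at hneg
    unfold Tc TA WC
    have hsplit : gauss k (((m+1:ℕ):ℤ) - ((h0+1:ℕ):ℤ) - (j:ℤ)) ((h0+1:ℕ):ℤ) =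
        gauss k ((((m+1:ℕ):ℤ) - ((h0+1:ℕ):ℤ) - (j:ℤ) - 1)) (((h0+1:ℕ):ℤ) - 1) +
          Polynomial.X ^ (k*(h0+1)) *
            gauss k ((((m+1:ℕ):ℤ) - ((h0+1:ℕ):ℤ) - (j:ℤ) - 1)) ((h0+1:ℕ):ℤ) := by
      have e : ((m+1:ℕ):ℤ) - ((h0+1:ℕ):ℤ) - (j:ℤ) = (((m+1:ℕ):ℤ) - ((h0+1:ℕ):ℤ) - (j:ℤ) - 1) + 1 := by
        ring
      conv_lhs => rw [e, pascal k hk _ (h0+1) (by omega)]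
    rw [hsplit, pq_add, pq_mul, pq_X_pow, gaussC_succ]
    have e1 : (((m+1:ℕ):ℤ) - ((h0+1:ℕ):ℤ) - (j:ℤ) - 1) = (m:ℤ) - (h0:ℤ) - (j:ℤ) - 1 := by
      push_cast; ring
    have e2 : (((m+1:ℕ):ℤ) - ((h0+1:ℕ):ℤ) - (j:ℤ)).toNat = ((m:ℤ) - (h0:ℤ) - (j:ℤ) - 1).toNat + 1 := by
      omega
    have e3 : ((h0+1:ℕ):ℤ) - 1 = (h0:ℤ) := by push_cast; ring
    rw [e1, e2, e3]
    simp only [Nat.add_sub_cancel_left]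
    ring

lemma keyC2 (a b k m h0 j : ℕ) (hab : a ≤ b) :
    WC a b k (m+1) (h0+1) j = (X 0 : S3) * (X 2 : S3)^(k*(h0+1)+a) * Tc a b k m (h0+1) j := by
  obtain ⟨c, rfl⟩ : ∃ c, b = a + c := ⟨b - a, by omega⟩
  unfold WC Tc
  have e1 : (((m+1:ℕ):ℤ) - ((h0+1:ℕ):ℤ) - (j:ℤ) - 1) = (m:ℤ) - ((h0+1:ℕ):ℤ) - (j:ℤ) := by
    push_cast; ring
  rw [e1]
  by_cases hneg : (m:ℤ) - ((h0+1:ℕ):ℤ) - (j:ℤ) < 0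
  · rw [gauss_neg k ((m:ℤ) - ((h0+1:ℕ):ℤ) - (j:ℤ)) ((h0+1:ℕ):ℤ) (by omega), pq_zero, mul_zero, mul_zero]
    ring
  · have e2 : (((m+1:ℕ):ℤ) - ((h0+1:ℕ):ℤ) - (j:ℤ)).toNat = ((m:ℤ) - ((h0+1:ℕ):ℤ) - (j:ℤ)).toNat + 1 := by
      omega
    rw [e2]
    ring

lemma WC_last_zero (a b k m h0 : ℕ) :
    WC a b k (m+1) (h0+1) (m+1) = 0 := by
  unfold WC
  rw [gauss_neg k (((m+1:ℕ):ℤ) - ((h0+1:ℕ):ℤ) - ((m+1:ℕ):ℤ) - 1) ((h0+1:ℕ):ℤ) (by push_cast; omega), pq_zero, mul_zero]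

lemma R2 (a b k : ℕ) (hab : a ≤ b) (hk : 1 ≤ k) (m h0 : ℕ) :
    Cc a b k (m+1) (h0+1) =
      (X 0 : S3) * (X 2 : S3)^(k*(h0+1)+a) * (Ac a b k m h0 + Cc a b k m (h0+1)) := by
  unfold Cc Ac
  rw [Finset.sum_congr rfl (fun j _ => keyC1 a b k m h0 j hab hk), Finset.sum_add_distrib]
  have hA : ∑ j ∈ Finset.range (m+1+1), ((X 0 : S3) * (X 2 : S3)^(k*(h0+1)+a) * TA a b k m h0 j) =
      (X 0 : S3) * (X 2 : S3)^(k*(h0+1)+a) * ∑ i ∈ Finset.range m, TA a b k m h0 i := by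
    rw [← Finset.mul_sum]
    congr 1
    rw [Finset.sum_subset (by intro x hx; simp at hx ⊢; omega : Finset.range m ⊆ Finset.range (m+1+1))]
    intro x hx hxn
    simp at hx hxn
    exact TA_zero_of_neg a b k m h0 x (by omega)
  have hW : ∑ j ∈ Finset.range (m+1+1), WC a b k (m+1) (h0+1) j =
      ∑ j ∈ Finset.range (m+1), WC a b k (m+1) (h0+1) j := by
    rw [Finset.sum_range_succ, WC_last_zero, add_zero]
  rw [hA, hW, Finset.sum_congr rfl (fun j _ => keyC2 a b k m h0 j hab), ← Finset.mul_sum]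
  ring

lemma R2' (a b k : ℕ) (hk : 1 ≤ k) (m : ℕ) :
    Cc a b k m 0 = (X 0 : S3)^m * (X 2 : S3)^(m*a) := by
  unfold Cc
  rw [Finset.sum_eq_single_of_mem 0 (by simp)]
  · unfold Tc
    rw [show gaussC k 0 0 = 1 from by simp [gaussC]]
    rw [gauss_nat_eq k hk _ 0 m (by omega), GN_zero_right, pq_one]
    have e1 : ((m:ℤ) - ((0:ℕ):ℤ) - ((0:ℕ):ℤ)).toNat = m := by omega
    rw [e1]
    norm_num
  · intro j _ hj
    unfold Tc
    rw [show gaussC k 0 j = 0 from by simp [gaussC, hj], pq_zero, mul_zero, zero_mul]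

lemma Ac_one (a b k h : ℕ) (hab : a ≤ b) (hk : 1 ≤ k) :
    Ac a b k 1 h = if h = 0 then (X 1 : S3) * (X 2 : S3)^b else 0 := by
  unfold Ac
  rw [Finset.sum_range_one]
  match h with
  | 0 =>
    unfold TA
    rw [if_pos rfl]
    rw [gauss_nat_eq k hk _ 0 0 (by omega), GN_zero_right, pq_one,
      gauss_nat_eq k hk _ 0 0 (by omega), GN_zero_right, pq_one]
    have e1 : (((1:ℕ):ℤ) - ((0:ℕ):ℤ) - ((0:ℕ):ℤ) - 1).toNat = 0 := by omega
    rw [e1]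
    have e2 : 1 * a + k * 0 ^ 2 + k * 0 + (b - a) * (0 + 0 + 1) = b := by
      obtain ⟨c, rfl⟩ : ∃ c, b = a + c := ⟨b - a, by omega⟩
      simp
    rw [e2]
    ring
  | h0+1 =>
    rw [if_neg (Nat.succ_ne_zero h0)]
    exact TA_zero_of_neg a b k 1 (h0+1) 0 (by push_cast; omega)

lemma Cc_one_pos (a b k h0 : ℕ) : Cc a b k 1 (h0+1) = 0 := by
  unfold Cc
  apply Finset.sum_eq_zero
  intro j hj
  apply Tc_zero_of_neg a b k 1 (h0+1) j
  push_cast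
  omega

lemma mod_window {k x y : ℕ} (h : x % k = y % k) (h1 : y ≤ x) (h2 : x < y + k) : x = y := by
  have hd : k ∣ x - y := (Nat.modEq_iff_dvd' h1).1 (Nat.ModEq.symm h)
  obtain ⟨c, hc⟩ := hd
  rcases c with _ | c
  · omega
  · have : k ≤ k * (c+1) := Nat.le_mul_of_pos_right k (by omega)
    omega

lemma mod_eq_of_close {k x y : ℕ} (h : x % k = y % k) (h1 : x < y + k) (h2 : y < x + k) : x = y := by
  rcases le_total y x with hle | hle
  · exact mod_window h hle h1
  · exact (mod_window h.symm hle h2).symm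

lemma finite_bounded_lists : ∀ (m N : ℕ), {l : List ℕ | l.length = m ∧ ∀ x ∈ l, x ≤ N}.Finite := by
  intro m
  induction m with
  | zero =>
    intro N
    apply Set.Finite.subset (Set.finite_singleton ([] : List ℕ))
    rintro l ⟨hl, -⟩
    simp [List.length_eq_zero_iff.1 hl]
  | succ m ih =>
    intro N
    apply Set.Finite.subset (((Set.finite_Iic N).prod (ih N)).image (fun p => p.1 :: p.2))
    rintro l ⟨hl, hb⟩
    rcases l with _ | ⟨x, t⟩
    · simp at hl
    · refine ⟨(x, t), ⟨Set.mem_Iic.2 (hb x (by simp)), ⟨by simpa using hl, fun y hy => hb y (by simp [hy])⟩⟩, rfl⟩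

lemma babk_finite (a b k m lp : ℕ) :
    {l : List ℕ | IsBabk a b k m l ∧ l.head? = some lp}.Finite := by
  apply Set.Finite.subset (finite_bounded_lists m lp)
  rintro l ⟨⟨hlen, hsort, -, -, -⟩, hhead⟩
  rcases l with _ | ⟨x, t⟩
  · simp at hhead
  · refine ⟨hlen, ?_⟩
    obtain rfl : x = lp := by simpa using hhead
    intro y hy
    rcases List.mem_cons.1 hy with rfl | hy
    · exact le_refl _
    · exact List.rel_of_pairwise_cons hsort hy

def wt (a b k : ℕ) (l : List ℕ) : S3 :=
  (X 0 : S3) ^ (l.filter (fun x => x % k = a % k)).length *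
    (X 1 : S3) ^ (l.filter (fun x => x % k = b % k)).length *
      (X 2 : S3) ^ l.sum

lemma gab_eq_sum (a b k m lp : ℕ) :
    gab a b k m lp = ∑ l ∈ (babk_finite a b k m lp).toFinset, wt a b k l := by
  rw [gab]
  letI : Fintype {l : List ℕ // IsBabk a b k m l ∧ l.head? = some lp} :=
    (babk_finite a b k m lp).fintype
  rw [tsum_fintype]
  refine Finset.sum_bij' (fun l _ => l.1)
    (fun l hl => ⟨l, ((babk_finite a b k m lp).mem_toFinset).1 hl⟩) ?_ ?_ ?_ ?_ ?_ <;>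
    simp [(babk_finite a b k m lp).mem_toFinset, wt]

lemma wt_cons (a b k x : ℕ) (l : List ℕ) :
    wt a b k (x :: l) = wt a b k [x] * wt a b k l := by
  unfold wt
  simp only [List.filter_cons, List.sum_cons, List.filter_nil, List.sum_nil]
  by_cases h1 : x % k = a % k <;> by_cases h2 : x % k = b % k <;>
    by_cases h3 : a % k = b % k <;> simp_all <;> ring

lemma head_ge (a b k m : ℕ) (ha : 1 ≤ a) (hab : a ≤ b) (l : List ℕ) (y : ℕ)
    (h : IsBabk a b k m l) (hh : l.head? = some y) : a ≤ y := by
  obtain ⟨hlen, hsort, hres, hlast, hchain⟩ := h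
  rcases l with _ | ⟨x, t⟩
  · simp at hh
  · obtain rfl : y = x := by simpa using hh.symm
    have hmem : ∀ g, (y :: t).getLast? = some g → a ≤ g → a ≤ y := by
      intro g hg hag
      have hgm : g ∈ (y :: t).getLast? := by simp [Option.mem_def, hg]
      obtain ⟨hne, hgl⟩ := List.mem_getLast?_eq_getLast hgm
      have : g ∈ y :: t := hgl ▸ List.getLast_mem hne
      rcases List.mem_cons.1 this with rfl | hgt
      · exact hag
      · exact le_trans hag (List.rel_of_pairwise_cons hsort hgt)
    rcases hlast with hl | hl
    · exact hmem a hl (le_refl a)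
    · exact hmem b hl hab

lemma cons_iff (a b k m lp : ℕ) (hm : 1 ≤ m) (l : List ℕ) :
    (IsBabk a b k (m+1) l ∧ l.head? = some lp) ↔
      ((lp % k = a % k ∨ lp % k = b % k) ∧ ∃ l' y, l = lp :: l' ∧
        (IsBabk a b k m l' ∧ l'.head? = some y) ∧ y ≤ lp ∧ lp < y + k) := by
  constructor
  · rintro ⟨⟨hlen, hsort, hres, hlast, hchain⟩, hhead⟩
    rcases l with _ | ⟨x, t⟩
    · simp at hhead
    obtain rfl : lp = x := by simpa using hhead.symm
    rcases t with _ | ⟨y, t'⟩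
    · simp at hlen; omega
    refine ⟨hres lp (by simp), y :: t', y, rfl, ⟨⟨by simpa using hlen, hsort.of_cons,
      fun z hz => hres z (by simp [hz]), by rwa [List.getLast?_cons_cons] at hlast,
      (List.isChain_cons_cons.1 hchain).2⟩, rfl⟩,
      List.rel_of_pairwise_cons hsort (by simp), (List.isChain_cons_cons.1 hchain).1⟩
  · rintro ⟨hres, l', y, rfl, ⟨⟨hlen, hsort, hres', hlast, hchain⟩, hhead⟩, hyle, hylt⟩
    rcases l' with _ | ⟨y', t'⟩
    · simp at hhead
    have hyy : y' = y := by simpa using hhead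
    subst hyy
    refine ⟨⟨by simpa using hlen, List.pairwise_cons.2 ⟨?_, hsort⟩,
      ?_, by rwa [List.getLast?_cons_cons], List.isChain_cons_cons.2 ⟨hylt, hchain⟩⟩, rfl⟩
    · intro z hz
      rcases List.mem_cons.1 hz with rfl | hz
      · exact hyle
      · exact le_trans (List.rel_of_pairwise_cons hsort hz) hyle
    · intro z hz
      rcases List.mem_cons.1 hz with rfl | hz
      · exact hres
      · exact hres' z hz

lemma head_res (a b k m : ℕ) (l : List ℕ) (y : ℕ)
    (h : IsBabk a b k m l) (hh : l.head? = some y) : y % k = a % k ∨ y % k = b % k := by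
  obtain ⟨hlen, hsort, hres, hlast, hchain⟩ := h
  rcases l with _ | ⟨x, t⟩
  · simp at hh
  · obtain rfl : y = x := by simpa using hh.symm
    exact hres y (by simp)

lemma gab_succ₂ (a b k m lp y1 y2 : ℕ) (ha : 1 ≤ a) (hab : a ≤ b) (hm : 1 ≤ m) (hy12 : y1 ≠ y2)
    (hres : lp % k = a % k ∨ lp % k = b % k)
    (hwin : ∀ y, a ≤ y → (y % k = a % k ∨ y % k = b % k) →
      ((y ≤ lp ∧ lp < y + k) ↔ (y = y1 ∨ y = y2))) :
    gab a b k (m+1) lp = wt a b k [lp] * (gab a b k m y1 + gab a b k m y2) := by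
  have hset : {l : List ℕ | IsBabk a b k (m+1) l ∧ l.head? = some lp} =
      (fun l' => lp :: l') '' ({l' : List ℕ | IsBabk a b k m l' ∧ l'.head? = some y1} ∪
        {l' : List ℕ | IsBabk a b k m l' ∧ l'.head? = some y2}) := by
    ext l
    constructor
    · intro hl
      obtain ⟨hres', l', y, rfl, hl', hyle, hylt⟩ := (cons_iff a b k m lp hm l).1 hl
      have hay : a ≤ y := head_ge a b k m ha hab l' y hl'.1 hl'.2
      have hyres := head_res a b k m l' y hl'.1 hl'.2
      rcases (hwin y hay hyres).1 ⟨hyle, hylt⟩ with rfl | rfl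
      · exact ⟨l', Or.inl hl', rfl⟩
      · exact ⟨l', Or.inr hl', rfl⟩
    · rintro ⟨l', hl', rfl⟩
      apply (cons_iff a b k m lp hm _).2
      rcases hl' with hl' | hl'
      · have hay := head_ge a b k m ha hab l' y1 hl'.1 hl'.2
        have hyres := head_res a b k m l' y1 hl'.1 hl'.2
        obtain ⟨hw1, hw2⟩ := (hwin y1 hay hyres).2 (Or.inl rfl)
        exact ⟨hres, l', y1, rfl, hl', hw1, hw2⟩
      · have hay := head_ge a b k m ha hab l' y2 hl'.1 hl'.2
        have hyres := head_res a b k m l' y2 hl'.1 hl'.2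
        obtain ⟨hw1, hw2⟩ := (hwin y2 hay hyres).2 (Or.inr rfl)
        exact ⟨hres, l', y2, rfl, hl', hw1, hw2⟩
  have h1 := babk_finite a b k m y1
  have h2 := babk_finite a b k m y2
  rw [gab_eq_sum, gab_eq_sum, gab_eq_sum]
  have hT : (babk_finite a b k (m+1) lp).toFinset =
      Finset.image (fun l' => lp :: l') (h1.toFinset ∪ h2.toFinset) := by
    apply Finset.coe_injective
    rw [Finset.coe_image, Finset.coe_union, Set.Finite.coe_toFinset, Set.Finite.coe_toFinset,
      Set.Finite.coe_toFinset]
    exact hset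
  have hdisj : Disjoint h1.toFinset h2.toFinset := by
    rw [Finset.disjoint_left]
    intro l hl1 hl2
    rw [Set.Finite.mem_toFinset] at hl1 hl2
    exact hy12 (Option.some.inj (hl1.2.symm.trans hl2.2))
  rw [hT, Finset.sum_image (by intro x _ y _ hxy; simpa using hxy), Finset.sum_union hdisj,
    Finset.sum_congr rfl (fun l _ => wt_cons a b k lp l),
    Finset.sum_congr rfl (fun l _ => wt_cons a b k lp l),
    ← Finset.mul_sum, ← Finset.mul_sum, mul_add]

lemma gab_succ₁ (a b k m lp y1 : ℕ) (ha : 1 ≤ a) (hab : a ≤ b) (hm : 1 ≤ m)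
    (hres : lp % k = a % k ∨ lp % k = b % k)
    (hwin : ∀ y, a ≤ y → (y % k = a % k ∨ y % k = b % k) →
      ((y ≤ lp ∧ lp < y + k) ↔ y = y1)) :
    gab a b k (m+1) lp = wt a b k [lp] * gab a b k m y1 := by
  have hset : {l : List ℕ | IsBabk a b k (m+1) l ∧ l.head? = some lp} =
      (fun l' => lp :: l') '' {l' : List ℕ | IsBabk a b k m l' ∧ l'.head? = some y1} := by
    ext l
    constructor
    · intro hl
      obtain ⟨hres', l', y, rfl, hl', hyle, hylt⟩ := (cons_iff a b k m lp hm l).1 hl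
      have hay : a ≤ y := head_ge a b k m ha hab l' y hl'.1 hl'.2
      have hyres := head_res a b k m l' y hl'.1 hl'.2
      obtain rfl := (hwin y hay hyres).1 ⟨hyle, hylt⟩
      exact ⟨l', hl', rfl⟩
    · rintro ⟨l', hl', rfl⟩
      apply (cons_iff a b k m lp hm _).2
      have hay := head_ge a b k m ha hab l' y1 hl'.1 hl'.2
      have hyres := head_res a b k m l' y1 hl'.1 hl'.2
      obtain ⟨hw1, hw2⟩ := (hwin y1 hay hyres).2 rfl
      exact ⟨hres, l', y1, rfl, hl', hw1, hw2⟩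
  have h1 := babk_finite a b k m y1
  rw [gab_eq_sum, gab_eq_sum]
  have hT : (babk_finite a b k (m+1) lp).toFinset =
      Finset.image (fun l' => lp :: l') h1.toFinset := by
    apply Finset.coe_injective
    rw [Finset.coe_image, Set.Finite.coe_toFinset, Set.Finite.coe_toFinset]
    exact hset
  rw [hT, Finset.sum_image (by intro x _ y _ hxy; simpa using hxy),
    Finset.sum_congr rfl (fun l _ => wt_cons a b k lp l), ← Finset.mul_sum]

lemma resne (a b k : ℕ) (ha : 1 ≤ a) (hab : a < b) (hbk : b ≤ k) : a % k ≠ b % k := by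
  have hak : a % k = a := Nat.mod_eq_of_lt (by omega)
  rcases eq_or_lt_of_le hbk with rfl | hlt
  · rw [hak, Nat.mod_self]; omega
  · rw [hak, Nat.mod_eq_of_lt hlt]; omega

open MvPowerSeries in
lemma wt_single_bcase (a b k x : ℕ) (hmod : a % k ≠ b % k) (hx : x % k = b % k) :
    wt a b k [x] = (X 1 : S3) * (X 2 : S3)^x := by
  have hxa : ¬ (x % k = a % k) := fun h => hmod (h.symm.trans hx)
  unfold wt
  simp [List.filter_cons, hx, hxa, Ne.symm hmod]

open MvPowerSeries in
lemma wt_single_acase (a b k x : ℕ) (hmod : a % k ≠ b % k) (hx : x % k = a % k) :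
    wt a b k [x] = (X 0 : S3) * (X 2 : S3)^x := by
  have hxb : ¬ (x % k = b % k) := fun h => hmod (hx.symm.trans h)
  unfold wt
  simp [List.filter_cons, hx, hxb, hmod]

lemma win_b (a b k h : ℕ) (ha : 1 ≤ a) (hab : a < b) (hbk : b ≤ k) :
    ∀ y, a ≤ y → (y % k = a % k ∨ y % k = b % k) →
      ((y ≤ k*h+b ∧ k*h+b < y + k) ↔ (y = k*h+b ∨ y = k*h+a)) := by
  intro y hay hyres
  constructor
  · rintro ⟨h1, h2⟩
    rcases hyres with hy | hy
    · right
      exact mod_eq_of_close (by rw [hy, Nat.mul_add_mod]) (by omega) (by omega)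
    · left
      exact (mod_window (x := k*h+b) (y := y) (by rw [hy, Nat.mul_add_mod]) h1 h2).symm
  · rintro (rfl | rfl) <;> omega

lemma win_a_pos (a b k h0 : ℕ) (ha : 1 ≤ a) (hab : a < b) (hbk : b ≤ k) :
    ∀ y, a ≤ y → (y % k = a % k ∨ y % k = b % k) →
      ((y ≤ k*(h0+1)+a ∧ k*(h0+1)+a < y + k) ↔ (y = k*(h0+1)+a ∨ y = k*h0+b)) := by
  intro y hay hyres
  have hkk : k*(h0+1) = k*h0 + k := by ring
  constructor
  · rintro ⟨h1, h2⟩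
    rcases hyres with hy | hy
    · left
      exact (mod_window (x := k*(h0+1)+a) (y := y) (by rw [hy, Nat.mul_add_mod]) h1 h2).symm
    · right
      exact mod_eq_of_close (by rw [hy, Nat.mul_add_mod]) (by omega) (by omega)
  · rintro (rfl | rfl) <;> omega

lemma win_a_zero (a b k : ℕ) (ha : 1 ≤ a) (hab : a < b) (hbk : b ≤ k) :
    ∀ y, a ≤ y → (y % k = a % k ∨ y % k = b % k) →
      ((y ≤ k*0+a ∧ k*0+a < y + k) ↔ y = k*0+a) := by
  intro y hay hyres
  constructor
  · rintro ⟨h1, h2⟩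
    omega
  · rintro rfl
    omega

lemma gab_one (a b k lp : ℕ) (ha : 1 ≤ a) (hab : a < b) :
    gab a b k 1 lp = if lp = a ∨ lp = b then wt a b k [lp] else 0 := by
  rw [gab_eq_sum]
  by_cases hc : lp = a ∨ lp = b
  · rw [if_pos hc]
    have hset : {l : List ℕ | IsBabk a b k 1 l ∧ l.head? = some lp} = {[lp]} := by
      ext l
      constructor
      · rintro ⟨⟨hlen, hsort, hres, hlast, hchain⟩, hhead⟩
        rcases l with _ | ⟨x, t⟩
        · simp at hhead
        rcases t with _ | ⟨z, t'⟩
        · obtain rfl : lp = x := by simpa using hhead.symm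
          rfl
        · simp at hlen
      · rintro rfl
        refine ⟨⟨rfl, by simp, ?_, ?_, by simp [List.Chain']⟩, rfl⟩
        · intro x hx
          obtain rfl : x = lp := by simpa using hx
          rcases hc with rfl | rfl
          · exact Or.inl rfl
          · exact Or.inr rfl
        · rcases hc with rfl | rfl
          · exact Or.inl rfl
          · exact Or.inr rfl
    have hT : (babk_finite a b k 1 lp).toFinset = {[lp]} := by
      apply Finset.coe_injective
      rw [Set.Finite.coe_toFinset, hset, Finset.coe_singleton]
    rw [hT, Finset.sum_singleton]
  · rw [if_neg hc]
    have hset : {l : List ℕ | IsBabk a b k 1 l ∧ l.head? = some lp} = ∅ := by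
      ext l
      simp only [Set.mem_setOf_eq, Set.mem_empty_iff_false, iff_false]
      rintro ⟨⟨hlen, hsort, hres, hlast, hchain⟩, hhead⟩
      rcases l with _ | ⟨x, t⟩
      · simp at hhead
      rcases t with _ | ⟨z, t'⟩
      · obtain rfl : lp = x := by simpa using hhead.symm
        apply hc
        rcases hlast with hl | hl
        · exact Or.inl (by simpa using hl)
        · exact Or.inr (by simpa using hl)
      · simp at hlen
    have hT : (babk_finite a b k 1 lp).toFinset = ∅ := by
      apply Finset.coe_injective
      rw [Set.Finite.coe_toFinset, hset, Finset.coe_empty]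
    rw [hT, Finset.sum_empty]

theorem main_ind (a b k : ℕ) (ha : 1 ≤ a) (hab : a < b) (hbk : b ≤ k) :
    ∀ m, 1 ≤ m → ∀ h, gab a b k m (k*h+b) = Ac a b k m h ∧
      gab a b k m (k*h+a) = Cc a b k m h := by
  have hk : 1 ≤ k := by omega
  have hmod := resne a b k ha hab hbk
  intro m hm
  induction m, hm using Nat.le_induction with
  | base =>
    intro h
    constructor
    · rw [gab_one a b k _ ha hab, Ac_one a b k h (by omega) hk]
      match h with
      | 0 =>
        rw [if_pos (Or.inr (by ring)), if_pos rfl,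
          wt_single_bcase a b k _ hmod (Nat.mul_add_mod k 0 b)]
        norm_num
      | h0+1 =>
        rw [if_neg (by
          have e : k*(h0+1) = k*h0+k := by ring
          omega), if_neg (Nat.succ_ne_zero h0)]
    · rw [gab_one a b k _ ha hab]
      match h with
      | 0 =>
        rw [if_pos (Or.inl (by ring)), wt_single_acase a b k _ hmod (Nat.mul_add_mod k 0 a),
          R2' a b k hk 1]
        norm_num
      | h0+1 =>
        rw [if_neg (by
          have e : k*(h0+1) = k*h0+k := by ring
          omega), Cc_one_pos a b k h0]
  | succ m hm ih =>
    intro h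
    constructor
    · rw [gab_succ₂ a b k m (k*h+b) (k*h+b) (k*h+a) ha (by omega) hm (by omega)
        (Or.inr (Nat.mul_add_mod k h b)) (win_b a b k h ha hab hbk),
        (ih h).1, (ih h).2, wt_single_bcase a b k _ hmod (Nat.mul_add_mod k h b),
        R1 a b k (by omega) hk m h]
    · match h with
      | 0 =>
        rw [gab_succ₁ a b k m (k*0+a) (k*0+a) ha (by omega) hm
          (Or.inl (Nat.mul_add_mod k 0 a)) (win_a_zero a b k ha hab hbk),
          (ih 0).2, wt_single_acase a b k _ hmod (Nat.mul_add_mod k 0 a),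
          R2' a b k hk m, R2' a b k hk (m+1)]
        ring
      | h0+1 =>
        rw [gab_succ₂ a b k m (k*(h0+1)+a) (k*(h0+1)+a) (k*h0+b) ha (by omega) hm (by
          have e : k*(h0+1) = k*h0+k := by ring
          omega)
          (Or.inl (Nat.mul_add_mod k (h0+1) a)) (win_a_pos a b k h0 ha hab hbk),
          (ih (h0+1)).2, (ih h0).1, wt_single_acase a b k _ hmod (Nat.mul_add_mod k (h0+1) a),
          R2 a b k (by omega) hk m h0]
        ring

instance : T2Space S3 :=
  @Pi.t2Space ((Fin 3) →₀ ℕ) (fun _ => ℚ) (fun _ => ⊥)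
    (fun _ => @DiscreteTopology.toT2Space ℚ ⊥ (@DiscreteTopology.mk ℚ ⊥ rfl))

open MvPowerSeries in
/-- for m ≥ 1 and h ≥ 0, the generating function for partitions
in B_{a,b,k}(m) with largest part kh+b equals
∑_{i≥0} μ^{m-h-i-1} ν^{h+i+1} q^{ma+kh²+kh+(b-a)(h+i+1)} [h+i, h]_{q^k}
[m-h-i-1, h]_{q^k}. -/
theorem stmt6 (a b k m h : ℕ) (ha : 1 ≤ a) (hab : a < b) (hbk : b ≤ k)
    (hm : 1 ≤ m) :
    gab a b k m (k * h + b) =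
      ∑' i : ℕ,
        (X 0 : S3) ^ ((m : ℤ) - h - i - 1).toNat * (X 1 : S3) ^ (h + i + 1) *
          (X 2 : S3) ^ (m * a + k * h ^ 2 + k * h + (b - a) * (h + i + 1)) *
            pq (gauss k ((h : ℤ) + i) h) *
              pq (gauss k ((m : ℤ) - h - i - 1) h) := by
  rw [(main_ind a b k ha hab hbk m hm h).1, Ac]
  refine (tsum_eq_sum ?_).symm
  intro i hi
  simp only [Finset.mem_range, not_lt] at hi
  exact TA_zero_of_neg a b k m h i (by omega)
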